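/- Fix t ∈ ℝ and set h s = ⟪γ s, n s⟫ and Δ = det(n t, deriv n t, iteratedDeriv 2 n t). If Δ ≠ 0, then there exists a unique x ∈ E satisfying the system ⟪x, n t⟫ = h t, ⟪x, deriv n t⟫ = deriv h t, ⟪x, iteratedDeriv 2 n t⟫ = iteratedDeriv 2 h t, namely x = γ t − (κ2 t / Δ) • (n t × deriv n t). (This x is the point ĥγ*(t) of the dual curve of the dual-boundary, i.e. the point of the singular locus of the boundary-envelope corresponding to parameter t.) -/

import Mathlib

open scoped RealInnerProductSpace

noncomputable def cross3 (u v : EuclideanSpace ℝ (Fin 3)) : EuclideanSpace ℝ (Fin 3) :=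
  (WithLp.equiv 2 (Fin 3 → ℝ)).symm
    ![u 1 * v 2 - u 2 * v 1, u 2 * v 0 - u 0 * v 2, u 0 * v 1 - u 1 * v 0]

noncomputable def det3 (u v w : EuclideanSpace ℝ (Fin 3)) : ℝ :=
  Matrix.det (Matrix.of (fun i j => ![u, v, w] j i))

lemma inner3 (x y : EuclideanSpace ℝ (Fin 3)) :
    ⟪x, y⟫ = x 0 * y 0 + x 1 * y 1 + x 2 * y 2 := by
  simp [PiLp.inner_apply, Fin.sum_univ_three, RCLike.inner_apply, mul_comm]

lemma det3_eq (u v w : EuclideanSpace ℝ (Fin 3)) :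
    det3 u v w = u 0 * (v 1 * w 2 - v 2 * w 1) - v 0 * (u 1 * w 2 - u 2 * w 1)
      + w 0 * (u 1 * v 2 - u 2 * v 1) := by
  simp [det3, Matrix.det_fin_three, Matrix.of_apply]
  ring

lemma inner_cross3_left (u v : EuclideanSpace ℝ (Fin 3)) : ⟪cross3 u v, u⟫ = 0 := by
  rw [inner3]; show (u 1 * v 2 - u 2 * v 1) * u 0 + (u 2 * v 0 - u 0 * v 2) * u 1
    + (u 0 * v 1 - u 1 * v 0) * u 2 = 0
  ring

lemma inner_cross3_right (u v : EuclideanSpace ℝ (Fin 3)) : ⟪cross3 u v, v⟫ = 0 := by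
  rw [inner3]; show (u 1 * v 2 - u 2 * v 1) * v 0 + (u 2 * v 0 - u 0 * v 2) * v 1
    + (u 0 * v 1 - u 1 * v 0) * v 2 = 0
  ring

lemma inner_cross3_det (u v w : EuclideanSpace ℝ (Fin 3)) :
    ⟪cross3 u v, w⟫ = det3 u v w := by
  rw [inner3, det3_eq]
  show (u 1 * v 2 - u 2 * v 1) * w 0 + (u 2 * v 0 - u 0 * v 2) * w 1
    + (u 0 * v 1 - u 1 * v 0) * w 2 = _
  ring

lemma unique3 (u v w y : EuclideanSpace ℝ (Fin 3)) (hΔ : det3 u v w ≠ 0)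
    (h1 : ⟪y, u⟫ = 0) (h2 : ⟪y, v⟫ = 0) (h3 : ⟪y, w⟫ = 0) : y = 0 := by
  rw [det3_eq] at hΔ
  rw [inner3] at h1 h2 h3
  have key : ∀ i : Fin 3, y i = 0 := by
    intro i
    fin_cases i
    · have h0 : y 0 * (u 0 * (v 1 * w 2 - v 2 * w 1) - v 0 * (u 1 * w 2 - u 2 * w 1)
        + w 0 * (u 1 * v 2 - u 2 * v 1)) = 0 := by
        linear_combination (v 1 * w 2 - v 2 * w 1) * h1 - (u 1 * w 2 - u 2 * w 1) * h2
          + (u 1 * v 2 - u 2 * v 1) * h3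
      exact (mul_eq_zero.mp h0).resolve_right hΔ
    · have h0 : y 1 * (u 0 * (v 1 * w 2 - v 2 * w 1) - v 0 * (u 1 * w 2 - u 2 * w 1)
        + w 0 * (u 1 * v 2 - u 2 * v 1)) = 0 := by
        linear_combination (-(v 0 * w 2 - v 2 * w 0)) * h1 + (u 0 * w 2 - u 2 * w 0) * h2
          - (u 0 * v 2 - u 2 * v 0) * h3
      exact (mul_eq_zero.mp h0).resolve_right hΔ
    · have h0 : y 2 * (u 0 * (v 1 * w 2 - v 2 * w 1) - v 0 * (u 1 * w 2 - u 2 * w 1)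
        + w 0 * (u 1 * v 2 - u 2 * v 1)) = 0 := by
        linear_combination (v 0 * w 1 - v 1 * w 0) * h1 - (u 0 * w 1 - u 1 * w 0) * h2
          + (u 0 * v 1 - u 1 * v 0) * h3
      exact (mul_eq_zero.mp h0).resolve_right hΔ
  ext i; exact key i

theorem stmt9
    (γ e1 e2 e3 : ℝ → EuclideanSpace ℝ (Fin 3)) (κ1 κ2 κ3 : ℝ → ℝ)
    (hγ : ContDiff ℝ (⊤ : ℕ∞) γ)
    (he1s : ContDiff ℝ (⊤ : ℕ∞) e1) (he2s : ContDiff ℝ (⊤ : ℕ∞) e2)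
    (he3s : ContDiff ℝ (⊤ : ℕ∞) e3)
    (hκ1s : ContDiff ℝ (⊤ : ℕ∞) κ1) (hκ2s : ContDiff ℝ (⊤ : ℕ∞) κ2)
    (hκ3s : ContDiff ℝ (⊤ : ℕ∞) κ3)
    (he1 : e1 = deriv γ)
    (hON : ∀ t, Orthonormal ℝ ![e1 t, e2 t, e3 t])
    (hor : ∀ t, e3 t = cross3 (e1 t) (e2 t))
    (hE1 : ∀ t, deriv e1 t = κ1 t • e2 t + κ2 t • e3 t)
    (hE2 : ∀ t, deriv e2 t = (-(κ1 t)) • e1 t + κ3 t • e3 t)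
    (hE3 : ∀ t, deriv e3 t = (-(κ2 t)) • e1 t - κ3 t • e2 t)
    (t : ℝ)
    (hΔ : det3 (e3 t) (deriv e3 t) (iteratedDeriv 2 e3 t) ≠ 0) :
    ∀ x : EuclideanSpace ℝ (Fin 3),
      (⟪x, e3 t⟫ = ⟪γ t, e3 t⟫
        ∧ ⟪x, deriv e3 t⟫ = deriv (fun s => ⟪γ s, e3 s⟫) t
        ∧ ⟪x, iteratedDeriv 2 e3 t⟫ = iteratedDeriv 2 (fun s => ⟪γ s, e3 s⟫) t)
      ↔ x = γ t - (κ2 t / det3 (e3 t) (deriv e3 t) (iteratedDeriv 2 e3 t))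
              • cross3 (e3 t) (deriv e3 t) := by
  -- derivative computations
  have hγd : ∀ s, HasDerivAt γ (e1 s) s := fun s => by
    rw [he1]; exact (hγ.differentiable (by simp) s).hasDerivAt
  have he3d : ∀ s, HasDerivAt e3 (deriv e3 s) s := fun s =>
    (he3s.differentiable (by simp) s).hasDerivAt
  have h13 : ∀ s, ⟪e1 s, e3 s⟫ = 0 := fun s => by
    have := (hON s).2 (show (0 : Fin 3) ≠ 2 by decide)
    simpa using this
  have h12 : ∀ s, ⟪e1 s, e2 s⟫ = 0 := fun s => by
    have := (hON s).2 (show (0 : Fin 3) ≠ 1 by decide)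
    simpa using this
  have h11 : ∀ s, ⟪e1 s, e1 s⟫ = 1 := fun s => by
    have := (hON s).1 0
    simp only [Matrix.cons_val_zero] at this
    rw [real_inner_self_eq_norm_mul_norm, this, mul_one]
  have hd1 : ∀ s, HasDerivAt (fun r => ⟪γ r, e3 r⟫) (⟪γ s, deriv e3 s⟫) s := by
    intro s
    have := ((hγd s).inner ℝ (he3d s))
    simpa [h13 s] using this
  have A1 : deriv (fun s => ⟪γ s, e3 s⟫) = fun s => ⟪γ s, deriv e3 s⟫ := by
    funext s; exact (hd1 s).deriv
  have he3ds : ContDiff ℝ (⊤ : ℕ∞) (deriv e3) := by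
    have := (contDiff_infty_iff_deriv.mp he3s).2
    simpa using this
  have he3dd : ∀ s, HasDerivAt (deriv e3) (iteratedDeriv 2 e3 s) s := fun s => by
    have := (he3ds.differentiable (by simp) s).hasDerivAt
    rwa [show deriv (deriv e3) s = iteratedDeriv 2 e3 s by
      rw [iteratedDeriv_succ, iteratedDeriv_one]] at this
  have h1d3 : ⟪e1 t, deriv e3 t⟫ = -κ2 t := by
    rw [hE3 t, inner_sub_right, real_inner_smul_right, real_inner_smul_right,
      h11 t, h12 t]
    ring
  have A2 : iteratedDeriv 2 (fun s => ⟪γ s, e3 s⟫) t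
      = ⟪γ t, iteratedDeriv 2 e3 t⟫ - κ2 t := by
    rw [iteratedDeriv_succ, iteratedDeriv_one, A1]
    have := ((hγd t).inner ℝ (he3dd t)).deriv
    rw [this, h1d3]
    ring
  -- set up notation
  set n := e3 t with hn
  set n' := deriv e3 t with hn'
  set n'' := iteratedDeriv 2 e3 t with hn''
  set D := det3 n n' n'' with hD
  set x₀ := γ t - (κ2 t / D) • cross3 n n' with hx₀
  -- x₀ satisfies the system
  have s1 : ⟪x₀, n⟫ = ⟪γ t, n⟫ := by
    rw [hx₀, inner_sub_left, real_inner_smul_left, inner_cross3_left]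
    ring
  have s2 : ⟪x₀, n'⟫ = deriv (fun s => ⟪γ s, e3 s⟫) t := by
    rw [hx₀, inner_sub_left, real_inner_smul_left, inner_cross3_right, A1]
    ring
  have s3 : ⟪x₀, n''⟫ = iteratedDeriv 2 (fun s => ⟪γ s, e3 s⟫) t := by
    rw [hx₀, inner_sub_left, real_inner_smul_left, inner_cross3_det, A2, ← hD]
    field_simp
  intro x
  constructor
  · rintro ⟨h1, h2, h3⟩
    have hy : x - x₀ = 0 := by
      refine unique3 n n' n'' (x - x₀) hΔ ?_ ?_ ?_
      · rw [inner_sub_left, h1, s1, sub_self]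
      · rw [inner_sub_left, h2, s2, sub_self]
      · rw [inner_sub_left, h3, s3, sub_self]
    have := sub_eq_zero.mp hy
    rw [this, hx₀]
  · rintro rfl
    exact ⟨s1, s2, s3⟩
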